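/- For every f ∈ ker D, the image Π*(f) lies in the subring 𝕜[x_{0,j} : 1 ≤ j ≤ l] of R′; that is, Π*(f) involves only the variables x_{0,j} for those indices j with n_j even. -/

import Mathlib

/- STATEMENT 2: `Π*` maps `ker D` into the subring generated by the variables
`x_{0,j}` with `n_j` even (i.e. `j ≤ l`). -/

open MvPolynomial Finset
set_option linter.unusedSectionVars false
set_option linter.unusedVariables false
set_option maxHeartbeats 1000000

variable (𝕜 : Type) [Field 𝕜] [CharZero 𝕜] (k : ℕ) (n : Fin k → ℕ)

/-- The variable `x_{i,j}` (as `X ⟨j,i⟩`), or `0` if `i` is out of range. -/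
noncomputable def Xv (j : Fin k) (i : ℕ) : MvPolynomial (Σ j : Fin k, Fin (n j + 1)) 𝕜 :=
  if h : i ≤ n j then MvPolynomial.X ⟨j, ⟨i, Nat.lt_succ_of_le h⟩⟩ else 0

/-- The Weitzenböck derivation `D` with `D x_{0,j} = 0` and `D x_{i,j} = x_{i-1,j}`. -/
noncomputable def Dw : Derivation 𝕜 (MvPolynomial (Σ j : Fin k, Fin (n j + 1)) 𝕜)
    (MvPolynomial (Σ j : Fin k, Fin (n j + 1)) 𝕜) :=
  mkDerivation 𝕜 fun v => if (v.2 : ℕ) = 0 then 0 else Xv 𝕜 k n v.1 ((v.2 : ℕ) - 1)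

/-- The variable `x_{i,j}` of `R' = 𝕜[x_{i,j} : 0 ≤ i ≤ ⌊n_j/2⌋]`, or `0` if out of range. -/
noncomputable def Xv' (j : Fin k) (i : ℕ) : MvPolynomial (Σ j : Fin k, Fin (n j / 2 + 1)) 𝕜 :=
  if h : i ≤ n j / 2 then MvPolynomial.X ⟨j, ⟨i, Nat.lt_succ_of_le h⟩⟩ else 0

/-- The projection `Π* : R → R'`, sending `x_{i,j}` to `x_{i - ⌈n_j/2⌉, j}` if
`i ≥ ⌈n_j/2⌉` and to `0` otherwise. -/
noncomputable def projStar : MvPolynomial (Σ j : Fin k, Fin (n j + 1)) 𝕜 →ₐ[𝕜]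
    MvPolynomial (Σ j : Fin k, Fin (n j / 2 + 1)) 𝕜 :=
  aeval fun v => if (n v.1 + 1) / 2 ≤ (v.2 : ℕ) then Xv' 𝕜 k n v.1 ((v.2 : ℕ) - (n v.1 + 1) / 2)
    else 0

/-- weight of a variable: `n_j - 2 i`. -/
def wZ (v : Σ j : Fin k, Fin (n j + 1)) : ℤ := (n v.1 : ℤ) - 2 * (v.2 : ℕ)

/-- auxiliary ℕ-weight `n_j - i`, strictly decreased by `Fd`. -/
def wu (v : Σ j : Fin k, Fin (n j + 1)) : ℕ := n v.1 - (v.2 : ℕ)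

noncomputable def Fd : Derivation 𝕜 (MvPolynomial (Σ j : Fin k, Fin (n j + 1)) 𝕜)
    (MvPolynomial (Σ j : Fin k, Fin (n j + 1)) 𝕜) :=
  mkDerivation 𝕜 fun v =>
    ((((v.2 : ℕ) + 1) * (n v.1 - (v.2 : ℕ)) : ℕ) : 𝕜) • Xv 𝕜 k n v.1 ((v.2 : ℕ) + 1)

noncomputable def Hd : Derivation 𝕜 (MvPolynomial (Σ j : Fin k, Fin (n j + 1)) 𝕜)
    (MvPolynomial (Σ j : Fin k, Fin (n j + 1)) 𝕜) :=
  mkDerivation 𝕜 fun v => ((wZ k n v : ℤ) : 𝕜) • X v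

lemma Xv_of_le {j : Fin k} {i : ℕ} (h : i ≤ n j) :
    Xv 𝕜 k n j i = X ⟨j, ⟨i, Nat.lt_succ_of_le h⟩⟩ := dif_pos h

lemma Xv_of_gt {j : Fin k} {i : ℕ} (h : ¬ i ≤ n j) : Xv 𝕜 k n j i = 0 := dif_neg h

lemma X_eq_Xv (v : Σ j : Fin k, Fin (n j + 1)) : X v = Xv 𝕜 k n v.1 (v.2 : ℕ) := by
  obtain ⟨j, i⟩ := v
  rw [Xv_of_le 𝕜 k n (Nat.lt_succ_iff.mp i.2)]

lemma Dw_Xv {j : Fin k} {i : ℕ} (h : i ≤ n j) :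
    Dw 𝕜 k n (Xv 𝕜 k n j i) = if i = 0 then 0 else Xv 𝕜 k n j (i - 1) := by
  rw [Xv_of_le 𝕜 k n h, Dw, mkDerivation_X]

lemma Fd_Xv (j : Fin k) (i : ℕ) :
    Fd 𝕜 k n (Xv 𝕜 k n j i) = (((i + 1) * (n j - i) : ℕ) : 𝕜) • Xv 𝕜 k n j (i + 1) := by
  by_cases h : i ≤ n j
  · rw [Xv_of_le 𝕜 k n h, Fd, mkDerivation_X]
  · rw [Xv_of_gt 𝕜 k n h, map_zero]
    have : n j - i = 0 := by omega
    rw [this]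
    simp

lemma Hd_Xv (j : Fin k) (i : ℕ) :
    Hd 𝕜 k n (Xv 𝕜 k n j i) = (((n j : ℤ) - 2 * i : ℤ) : 𝕜) • Xv 𝕜 k n j i := by
  by_cases h : i ≤ n j
  · rw [Xv_of_le 𝕜 k n h, Hd, mkDerivation_X, wZ]
  · rw [Xv_of_gt 𝕜 k n h, map_zero, smul_zero]

lemma bracket_EF : ⁅Dw 𝕜 k n, Fd 𝕜 k n⁆ = Hd 𝕜 k n := by
  apply derivation_ext
  intro v
  obtain ⟨j, iF⟩ := v
  set i : ℕ := (iF : ℕ) with hi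
  have hin : i ≤ n j := Nat.lt_succ_iff.mp iF.2
  rw [Derivation.commutator_apply]
  have h1 : Dw 𝕜 k n (Fd 𝕜 k n (X ⟨j, iF⟩)) =
      (((i + 1) * (n j - i) : ℕ) : 𝕜) • Xv 𝕜 k n j i := by
    rw [X_eq_Xv, Fd_Xv, Derivation.map_smul]
    by_cases hc : i < n j
    · rw [Dw_Xv 𝕜 k n (by omega : i + 1 ≤ n j), if_neg (Nat.succ_ne_zero i),
        Nat.add_sub_cancel]
    · rw [show n j - i = 0 by omega, mul_zero]
      simp
  have h2 : Fd 𝕜 k n (Dw 𝕜 k n (X ⟨j, iF⟩)) =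
      ((i * (n j - i + 1) : ℕ) : 𝕜) • Xv 𝕜 k n j i := by
    rw [X_eq_Xv, Dw_Xv 𝕜 k n hin]
    by_cases h0 : i = 0
    · simp [h0]
    · rw [if_neg h0, Fd_Xv]
      have e1 : i - 1 + 1 = i := by omega
      have e3 : n j - (i - 1) = n j - i + 1 := by omega
      rw [e1, e3]
  rw [h1, h2, X_eq_Xv, Hd_Xv, ← sub_smul]
  congr 1
  push_cast [Nat.cast_sub hin]
  ring

lemma bracket_HF : ⁅Hd 𝕜 k n, Fd 𝕜 k n⁆ = (-2 : 𝕜) • Fd 𝕜 k n := by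
  apply derivation_ext
  intro v
  obtain ⟨j, iF⟩ := v
  set i : ℕ := (iF : ℕ) with hi
  rw [Derivation.commutator_apply, Derivation.smul_apply, X_eq_Xv, Fd_Xv,
    Derivation.map_smul, Hd_Xv, Hd_Xv, Derivation.map_smul, Fd_Xv,
    smul_smul, smul_smul, smul_smul, ← sub_smul]
  congr 1
  push_cast
  ring

lemma EF_apply (p : MvPolynomial (Σ j : Fin k, Fin (n j + 1)) 𝕜) :
    Dw 𝕜 k n (Fd 𝕜 k n p) = Fd 𝕜 k n (Dw 𝕜 k n p) + Hd 𝕜 k n p := by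
  have h : ⁅Dw 𝕜 k n, Fd 𝕜 k n⁆ p = Hd 𝕜 k n p := by rw [bracket_EF]
  rw [Derivation.commutator_apply] at h
  linear_combination h

lemma HF_apply (p : MvPolynomial (Σ j : Fin k, Fin (n j + 1)) 𝕜) :
    Hd 𝕜 k n (Fd 𝕜 k n p) = Fd 𝕜 k n (Hd 𝕜 k n p) - (2 : 𝕜) • Fd 𝕜 k n p := by
  have h : ⁅Hd 𝕜 k n, Fd 𝕜 k n⁆ p = ((-2 : 𝕜) • Fd 𝕜 k n) p := by rw [bracket_HF]
  rw [Derivation.commutator_apply, Derivation.smul_apply] at h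
  have h2 := sub_eq_iff_eq_add.mp h
  rw [h2]
  module

lemma Hd_iter (g : MvPolynomial (Σ j : Fin k, Fin (n j + 1)) 𝕜) (w : ℤ)
    (hH : Hd 𝕜 k n g = ((w : ℤ) : 𝕜) • g) (m : ℕ) :
    Hd 𝕜 k n ((⇑(Fd 𝕜 k n))^[m] g) = (((w - 2 * m : ℤ)) : 𝕜) • (⇑(Fd 𝕜 k n))^[m] g := by
  induction m with
  | zero => simpa using hH
  | succ m ih =>
    rw [Function.iterate_succ_apply', HF_apply, ih, Derivation.map_smul, ← sub_smul]
    congr 1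
    push_cast
    ring

lemma Dw_iter (g : MvPolynomial (Σ j : Fin k, Fin (n j + 1)) 𝕜) (w : ℤ)
    (hE : Dw 𝕜 k n g = 0) (hH : Hd 𝕜 k n g = ((w : ℤ) : 𝕜) • g) (m : ℕ) :
    Dw 𝕜 k n ((⇑(Fd 𝕜 k n))^[m + 1] g) =
      ((((m : ℤ) + 1) * (w - m) : ℤ) : 𝕜) • (⇑(Fd 𝕜 k n))^[m] g := by
  induction m with
  | zero =>
    rw [Function.iterate_one, EF_apply, hE, map_zero, zero_add, hH]
    norm_num
  | succ m ih =>
    rw [show m + 1 + 1 = (m + 1) + 1 from rfl, Function.iterate_succ_apply' (⇑(Fd 𝕜 k n)) (m + 1), EF_apply, ih, Derivation.map_smul,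
      show (Fd 𝕜 k n) ((⇑(Fd 𝕜 k n))^[m] g) = (⇑(Fd 𝕜 k n))^[m + 1] g
        from (Function.iterate_succ_apply' _ m g).symm,
      Hd_iter 𝕜 k n g w hH (m + 1), ← add_smul]
    congr 1
    push_cast
    ring

lemma weight_single {M : Type*} [AddCommMonoid M] {σ' : Type*} (w : σ' → M) (v : σ') (m : ℕ) :
    Finsupp.weight w (Finsupp.single v m) = m • w v := by
  rw [Finsupp.weight_apply, Finsupp.sum_single_index]
  exact zero_smul ℕ _

lemma weight_sub_single {M : Type*} [AddCommGroup M] {σ' : Type*} (w : σ' → M)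
    (s : σ' →₀ ℕ) (v : σ') (hv : v ∈ s.support) :
    Finsupp.weight w (s - Finsupp.single v 1) = Finsupp.weight w s - w v := by
  have hle : Finsupp.single v 1 ≤ s := by
    rw [Finsupp.single_le_iff]
    exact Nat.one_le_iff_ne_zero.mpr (Finsupp.mem_support_iff.mp hv)
  have hs : s - Finsupp.single v 1 + Finsupp.single v 1 = s := tsub_add_cancel_of_le hle
  have := congrArg (Finsupp.weight w) hs
  rw [map_add, weight_single, one_smul] at this
  rw [eq_sub_iff_add_eq]
  exact this

lemma weight_sub_single_add {M : Type*} [AddCommMonoid M] {σ' : Type*} (w : σ' → M)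
    (s : σ' →₀ ℕ) (v : σ') (hv : v ∈ s.support) :
    Finsupp.weight w (s - Finsupp.single v 1) + w v = Finsupp.weight w s := by
  have hle : Finsupp.single v 1 ≤ s := by
    rw [Finsupp.single_le_iff]
    exact Nat.one_le_iff_ne_zero.mpr (Finsupp.mem_support_iff.mp hv)
  have hs : s - Finsupp.single v 1 + Finsupp.single v 1 = s := tsub_add_cancel_of_le hle
  have := congrArg (Finsupp.weight w) hs
  rwa [map_add, weight_single, one_smul] at this

lemma mkDer_monomial (f : (Σ j : Fin k, Fin (n j + 1)) → MvPolynomial (Σ j : Fin k, Fin (n j + 1)) 𝕜)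
    (s : (Σ j : Fin k, Fin (n j + 1)) →₀ ℕ) (c : 𝕜) :
    mkDerivation 𝕜 f (monomial s c) =
      ∑ v ∈ s.support, (s v : 𝕜) • (monomial (s - Finsupp.single v 1) c * f v) := by
  rw [mkDerivation_monomial, Finsupp.sum, Finset.smul_sum]
  refine Finset.sum_congr rfl fun v hv => ?_
  rw [smul_eq_mul, smul_eq_C_mul, smul_eq_C_mul, ← mul_assoc, ← mul_assoc,
    C_mul_monomial, C_mul_monomial, mul_comm c _]

lemma Hd_monomial (s : (Σ j : Fin k, Fin (n j + 1)) →₀ ℕ) (c : 𝕜) :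
    Hd 𝕜 k n (monomial s c) =
      ((Finsupp.weight (wZ k n) s : ℤ) : 𝕜) • monomial s c := by
  rw [show Hd 𝕜 k n = mkDerivation 𝕜 (fun v => ((wZ k n v : ℤ) : 𝕜) • X v) from rfl,
    mkDer_monomial]
  have hterm : ∀ v ∈ s.support,
      (s v : 𝕜) • (monomial (s - Finsupp.single v 1) c * (((wZ k n v : ℤ) : 𝕜) • X v)) =
      ((s v : 𝕜) * ((wZ k n v : ℤ) : 𝕜)) • monomial s c := by
    intro v hv
    have hmul : monomial (s - Finsupp.single v 1) c * X v = monomial s c := by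
      rw [X, monomial_mul, mul_one]
      have hle : Finsupp.single v 1 ≤ s := by
        rw [Finsupp.single_le_iff]
        exact Nat.one_le_iff_ne_zero.mpr (Finsupp.mem_support_iff.mp hv)
      rw [tsub_add_cancel_of_le hle]
    rw [mul_smul_comm, hmul, smul_smul]
  rw [Finset.sum_congr rfl hterm, ← Finset.sum_smul]
  congr 1
  rw [Finsupp.weight_apply, Finsupp.sum]
  push_cast
  refine Finset.sum_congr rfl fun v hv => ?_
  rw [nsmul_eq_mul, Int.cast_mul, Int.cast_natCast]

lemma Hd_eigen (g : MvPolynomial (Σ j : Fin k, Fin (n j + 1)) 𝕜) (w : ℤ)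
    (hg : IsWeightedHomogeneous (wZ k n) g w) :
    Hd 𝕜 k n g = ((w : ℤ) : 𝕜) • g := by
  calc Hd 𝕜 k n g = ∑ s ∈ g.support, Hd 𝕜 k n (monomial s (coeff s g)) := by
        conv_lhs => rw [as_sum g]
        rw [map_sum]
    _ = ∑ s ∈ g.support, ((w : ℤ) : 𝕜) • monomial s (coeff s g) := by
        refine Finset.sum_congr rfl fun s hs => ?_
        rw [Hd_monomial, hg (mem_support_iff.mp hs)]
    _ = ((w : ℤ) : 𝕜) • g := by rw [← Finset.smul_sum, ← as_sum g]

lemma Fd_monomial_support (s : (Σ j : Fin k, Fin (n j + 1)) →₀ ℕ) (c : 𝕜)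
    (t : (Σ j : Fin k, Fin (n j + 1)) →₀ ℕ) (ht : t ∈ (Fd 𝕜 k n (monomial s c)).support) :
    Finsupp.weight (wu k n) t + 1 = Finsupp.weight (wu k n) s := by
  rw [show Fd 𝕜 k n = mkDerivation 𝕜 (fun v =>
      ((((v.2 : ℕ) + 1) * (n v.1 - (v.2 : ℕ)) : ℕ) : 𝕜) • Xv 𝕜 k n v.1 ((v.2 : ℕ) + 1)) from rfl,
    mkDer_monomial] at ht
  rw [mem_support_iff, coeff_sum] at ht
  obtain ⟨v, hv, hne⟩ := Finset.exists_ne_zero_of_sum_ne_zero ht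
  by_cases hle : (v.2 : ℕ) + 1 ≤ n v.1
  · rw [Xv_of_le 𝕜 k n hle] at hne
    set v' : Σ j : Fin k, Fin (n j + 1) :=
      ⟨v.1, ⟨(v.2 : ℕ) + 1, Nat.lt_succ_of_le hle⟩⟩ with hv'
    have hmul : monomial (s - Finsupp.single v 1) c * X v' =
        monomial ((s - Finsupp.single v 1) + Finsupp.single v' 1) c := by
      rw [X, monomial_mul, mul_one]
    rw [mul_smul_comm, hmul] at hne
    have hteq : t = (s - Finsupp.single v 1) + Finsupp.single v' 1 := by
      by_contra hc
      rw [coeff_smul, coeff_smul, coeff_monomial, if_neg (fun h => hc h.symm)] at hne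
      simp at hne
    rw [hteq, map_add, weight_single, one_smul]
    have h1 := weight_sub_single_add (wu k n) s v hv
    have h2 : wu k n v' + 1 = wu k n v := by
      simp only [wu, hv']
      have e1 : (v'.2 : ℕ) = (v.2 : ℕ) + 1 := rfl
      have e2 : n v'.1 = n v.1 := rfl
      omega
    omega
  · rw [Xv_of_gt 𝕜 k n hle] at hne
    simp at hne

lemma Fd_support_step (p : MvPolynomial (Σ j : Fin k, Fin (n j + 1)) 𝕜)
    (t : (Σ j : Fin k, Fin (n j + 1)) →₀ ℕ) (ht : t ∈ (Fd 𝕜 k n p).support) :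
    ∃ s ∈ p.support, Finsupp.weight (wu k n) t + 1 = Finsupp.weight (wu k n) s := by
  have hFp : Fd 𝕜 k n p = ∑ s ∈ p.support, Fd 𝕜 k n (monomial s (coeff s p)) := by
    conv_lhs => rw [as_sum p]
    rw [map_sum]
  rw [hFp, mem_support_iff, coeff_sum] at ht
  obtain ⟨s, hs, hne⟩ := Finset.exists_ne_zero_of_sum_ne_zero ht
  exact ⟨s, hs, Fd_monomial_support 𝕜 k n s _ t (mem_support_iff.mpr hne)⟩

lemma Fd_iter_support (m : ℕ) (p : MvPolynomial (Σ j : Fin k, Fin (n j + 1)) 𝕜)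
    (t : (Σ j : Fin k, Fin (n j + 1)) →₀ ℕ) (ht : t ∈ ((⇑(Fd 𝕜 k n))^[m] p).support) :
    ∃ s ∈ p.support, Finsupp.weight (wu k n) t + m = Finsupp.weight (wu k n) s := by
  induction m generalizing t with
  | zero => exact ⟨t, ht, rfl⟩
  | succ m ih =>
    rw [Function.iterate_succ_apply'] at ht
    obtain ⟨t', ht', h1⟩ := Fd_support_step 𝕜 k n _ t ht
    obtain ⟨s, hs, h2⟩ := ih t' ht'
    exact ⟨s, hs, by omega⟩

lemma Fd_nilpotent (p : MvPolynomial (Σ j : Fin k, Fin (n j + 1)) 𝕜) :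
    ∃ N, (⇑(Fd 𝕜 k n))^[N] p = 0 := by
  refine ⟨weightedTotalDegree (wu k n) p + 1, ?_⟩
  rw [← support_eq_empty, Finset.eq_empty_iff_forall_notMem]
  intro t ht
  obtain ⟨s, hs, heq⟩ := Fd_iter_support 𝕜 k n _ p t ht
  have := le_weightedTotalDegree (wu k n) hs
  omega

lemma weight_nonneg_of_ker (g : MvPolynomial (Σ j : Fin k, Fin (n j + 1)) 𝕜) (w : ℤ)
    (hg0 : g ≠ 0) (hE : Dw 𝕜 k n g = 0) (hg : IsWeightedHomogeneous (wZ k n) g w) :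
    0 ≤ w := by
  classical
  have hH := Hd_eigen 𝕜 k n g w hg
  have hP : ∃ m, (⇑(Fd 𝕜 k n))^[m] g = 0 := Fd_nilpotent 𝕜 k n g
  set M := Nat.find hP with hM
  have hM0 : M ≠ 0 := by
    intro h
    have hspec := Nat.find_spec hP
    rw [← hM, h] at hspec
    exact hg0 hspec
  obtain ⟨m, hm⟩ : ∃ m, M = m + 1 := ⟨M - 1, by omega⟩
  have h1 : (⇑(Fd 𝕜 k n))^[m + 1] g = 0 := by
    have hspec := Nat.find_spec hP
    rwa [← hM, hm] at hspec
  have h2 : (⇑(Fd 𝕜 k n))^[m] g ≠ 0 := Nat.find_min hP (by omega)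
  have h3 := Dw_iter 𝕜 k n g w hE hH m
  rw [h1, map_zero] at h3
  have h4 : ((((m : ℤ) + 1) * (w - m) : ℤ) : 𝕜) = 0 := by
    by_contra hc
    rcases smul_eq_zero.mp h3.symm with h | h
    · exact hc h
    · exact h2 h
  have h5 : ((m : ℤ) + 1) * (w - m) = 0 := by exact_mod_cast h4
  rcases mul_eq_zero.mp h5 with h | h <;> omega

lemma Dw_homog (p : MvPolynomial (Σ j : Fin k, Fin (n j + 1)) 𝕜) (u : ℤ)
    (hp : IsWeightedHomogeneous (wZ k n) p u) :
    IsWeightedHomogeneous (wZ k n) (Dw 𝕜 k n p) (u + 2) := by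
  have hfE : ∀ v : Σ j : Fin k, Fin (n j + 1), IsWeightedHomogeneous (wZ k n)
      (if (v.2 : ℕ) = 0 then 0 else Xv 𝕜 k n v.1 ((v.2 : ℕ) - 1)) (wZ k n v + 2) := by
    intro v
    by_cases h0 : (v.2 : ℕ) = 0
    · rw [if_pos h0]
      exact isWeightedHomogeneous_zero _ _ _
    · rw [if_neg h0]
      have hle : (v.2 : ℕ) - 1 ≤ n v.1 := by
        have := Nat.lt_succ_iff.mp v.2.2
        omega
      rw [Xv_of_le 𝕜 k n hle]
      have := isWeightedHomogeneous_X (R := 𝕜) (wZ k n)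
        (⟨v.1, ⟨(v.2 : ℕ) - 1, Nat.lt_succ_of_le hle⟩⟩ : Σ j : Fin k, Fin (n j + 1))
      have heq : wZ k n (⟨v.1, ⟨(v.2 : ℕ) - 1, Nat.lt_succ_of_le hle⟩⟩ :
          Σ j : Fin k, Fin (n j + 1)) = wZ k n v + 2 := by
        simp only [wZ]
        have h1 : 1 ≤ (v.2 : ℕ) := Nat.one_le_iff_ne_zero.mpr h0
        push_cast [Nat.cast_sub h1]
        ring
      rwa [heq] at this
  have hDp : Dw 𝕜 k n p = ∑ s ∈ p.support,
      ∑ v ∈ s.support, (s v : 𝕜) • (monomial (s - Finsupp.single v 1) (coeff s p) *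
        (if (v.2 : ℕ) = 0 then 0 else Xv 𝕜 k n v.1 ((v.2 : ℕ) - 1))) := by
    conv_lhs => rw [as_sum p]
    rw [map_sum]
    exact Finset.sum_congr rfl fun s hs => mkDer_monomial 𝕜 k n _ s _
  rw [hDp]
  apply IsWeightedHomogeneous.sum
  intro s hs
  apply IsWeightedHomogeneous.sum
  intro v hv
  have hws : Finsupp.weight (wZ k n) s = u := hp (mem_support_iff.mp hs)
  have hmono : IsWeightedHomogeneous (wZ k n)
      (monomial (s - Finsupp.single v 1) (coeff s p)) (u - wZ k n v) := by
    apply isWeightedHomogeneous_monomial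
    rw [weight_sub_single (wZ k n) s v hv, hws]
  have hmul := hmono.mul (hfE v)
  have : u - wZ k n v + (wZ k n v + 2) = u + 2 := by ring
  rw [this] at hmul
  rw [← mem_weightedHomogeneousSubmodule] at hmul ⊢
  exact Submodule.smul_mem _ _ hmul

lemma Dw_component (p : MvPolynomial (Σ j : Fin k, Fin (n j + 1)) 𝕜) (u : ℤ) :
    Dw 𝕜 k n (weightedHomogeneousComponent (wZ k n) u p) =
      weightedHomogeneousComponent (wZ k n) (u + 2) (Dw 𝕜 k n p) := by
  classical
  have hterm : ∀ s ∈ p.support,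
      Dw 𝕜 k n (weightedHomogeneousComponent (wZ k n) u (monomial s (coeff s p))) =
      weightedHomogeneousComponent (wZ k n) (u + 2) (Dw 𝕜 k n (monomial s (coeff s p))) := by
    intro s hs
    have hmem : monomial s (coeff s p) ∈
        weightedHomogeneousSubmodule 𝕜 (wZ k n) (Finsupp.weight (wZ k n) s) :=
      isWeightedHomogeneous_monomial _ _ _ rfl
    have hmem2 : Dw 𝕜 k n (monomial s (coeff s p)) ∈
        weightedHomogeneousSubmodule 𝕜 (wZ k n) (Finsupp.weight (wZ k n) s + 2) := by
      rw [mem_weightedHomogeneousSubmodule]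
      exact Dw_homog 𝕜 k n _ _ (isWeightedHomogeneous_monomial _ _ _ rfl)
    rw [weightedHomogeneousComponent_of_mem hmem, weightedHomogeneousComponent_of_mem hmem2,
      apply_ite (Dw 𝕜 k n), map_zero]
    exact if_congr (by constructor <;> intro h <;> omega) rfl rfl
  conv_lhs => rw [as_sum p]
  conv_rhs => rw [as_sum p]
  rw [map_sum (weightedHomogeneousComponent (wZ k n) u) _ p.support,
    map_sum (Dw 𝕜 k n) _ p.support, map_sum (Dw 𝕜 k n) _ p.support,
    map_sum (weightedHomogeneousComponent (wZ k n) (u + 2)) _ p.support]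
  exact Finset.sum_congr rfl hterm

lemma proj_monomial_mem (l : ℕ) (hodd : ∀ j : Fin k, l ≤ (j : ℕ) → Odd (n j))
    (s : (Σ j : Fin k, Fin (n j + 1)) →₀ ℕ) (c : 𝕜) (u : ℤ) (hu : 0 ≤ u)
    (hws : Finsupp.weight (wZ k n) s = u) :
    projStar 𝕜 k n (monomial s c) ∈ Algebra.adjoin 𝕜
      {p : MvPolynomial (Σ j : Fin k, Fin (n j / 2 + 1)) 𝕜 |
        ∃ j : Fin k, (j : ℕ) < l ∧ p = MvPolynomial.X ⟨j, 0⟩} := by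
  rw [projStar, aeval_monomial]
  by_cases hcase : ∀ v ∈ s.support, (n v.1 + 1) / 2 ≤ (v.2 : ℕ)
  · have hwnonpos : ∀ v ∈ s.support, wZ k n v ≤ 0 := by
      intro v hv
      have h1 := hcase v hv
      simp only [wZ]
      omega
    have hsum : ∑ v ∈ s.support, (s v) • wZ k n v = u := by
      rw [← hws, Finsupp.weight_apply, Finsupp.sum]
    have hzero : ∀ v ∈ s.support, (s v) • wZ k n v = 0 := by
      rw [← Finset.sum_eq_zero_iff_of_nonpos]
      · have hle : ∑ v ∈ s.support, (s v) • wZ k n v ≤ 0 :=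
          Finset.sum_nonpos fun v hv => smul_nonpos_of_nonneg_of_nonpos
            (Nat.zero_le _) (hwnonpos v hv)
        omega
      · intro v hv
        exact smul_nonpos_of_nonneg_of_nonpos (Nat.zero_le _) (hwnonpos v hv)
    have hfac : ∀ v ∈ s.support,
        (if (n v.1 + 1) / 2 ≤ (v.2 : ℕ)
          then Xv' 𝕜 k n v.1 ((v.2 : ℕ) - (n v.1 + 1) / 2) else 0) ∈ Algebra.adjoin 𝕜
        {p : MvPolynomial (Σ j : Fin k, Fin (n j / 2 + 1)) 𝕜 |
          ∃ j : Fin k, (j : ℕ) < l ∧ p = MvPolynomial.X ⟨j, 0⟩} := by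
      intro v hv
      have hsv : s v ≠ 0 := Finsupp.mem_support_iff.mp hv
      have hwv : wZ k n v = 0 := by
        have h1 := hzero v hv
        rcases smul_eq_zero.mp (by exact_mod_cast h1) with h | h
        · omega
        · exact h
      have h2i : n v.1 = 2 * (v.2 : ℕ) := by
        simp only [wZ] at hwv
        omega
      rw [if_pos (hcase v hv)]
      have hzero' : (v.2 : ℕ) - (n v.1 + 1) / 2 = 0 := by omega
      rw [hzero', Xv', dif_pos (Nat.zero_le _)]
      have hlt : (v.1 : ℕ) < l := by
        by_contra hge
        have := hodd v.1 (by omega)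
        rw [Nat.odd_iff] at this
        omega
      apply Algebra.subset_adjoin
      exact ⟨v.1, hlt, by congr 1⟩
    apply mul_mem
    · exact Subalgebra.algebraMap_mem _ c
    · rw [Finsupp.prod]
      exact prod_mem fun v hv => pow_mem (hfac v hv) _
  · push_neg at hcase
    obtain ⟨v, hv, hlt⟩ := hcase
    have hprod : (Finsupp.prod s fun v e =>
        (if (n v.1 + 1) / 2 ≤ (v.2 : ℕ)
          then Xv' 𝕜 k n v.1 ((v.2 : ℕ) - (n v.1 + 1) / 2) else 0) ^ e) = 0 := by
      rw [Finsupp.prod]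
      apply Finset.prod_eq_zero hv
      rw [if_neg (by omega), zero_pow (Finsupp.mem_support_iff.mp hv)]
    rw [hprod, mul_zero]
    exact zero_mem _

theorem projStar_image' (l' l : ℕ) (hl'l : l' ≤ l) (hlk : l ≤ k)
    (hodd : ∀ j : Fin k, l ≤ (j : ℕ) → Odd (n j))
    (f : MvPolynomial (Σ j : Fin k, Fin (n j + 1)) 𝕜) (hf : Dw 𝕜 k n f = 0) :
    projStar 𝕜 k n f ∈ Algebra.adjoin 𝕜
      {p : MvPolynomial (Σ j : Fin k, Fin (n j / 2 + 1)) 𝕜 |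
        ∃ j : Fin k, (j : ℕ) < l ∧ p = MvPolynomial.X ⟨j, 0⟩} := by
  classical
  have hrepr := sum_weightedHomogeneousComponent (wZ k n) f
  rw [show projStar 𝕜 k n f =
      projStar 𝕜 k n (∑ᶠ m : ℤ, weightedHomogeneousComponent (wZ k n) m f) from by
    rw [hrepr]]
  rw [finsum_eq_sum _ (weightedHomogeneousComponent_finsupp f), map_sum]
  apply Subalgebra.sum_mem
  intro u hu
  set g := weightedHomogeneousComponent (wZ k n) u f with hg
  have hgE : Dw 𝕜 k n g = 0 := by
    rw [hg, Dw_component, hf, map_zero]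
  by_cases hg0 : g = 0
  · rw [hg0, map_zero]
    exact zero_mem _
  · have hghom : IsWeightedHomogeneous (wZ k n) g u :=
      weightedHomogeneousComponent_isWeightedHomogeneous u f
    have hu0 : 0 ≤ u := weight_nonneg_of_ker 𝕜 k n g u hg0 hgE hghom
    rw [as_sum g, map_sum]
    apply Subalgebra.sum_mem
    intro s hs
    exact proj_monomial_mem 𝕜 k n l hodd s _ u hu0 (hghom (mem_support_iff.mp hs))

theorem projStar_image (𝕜 : Type) [Field 𝕜] [CharZero 𝕜] (k : ℕ) (hk : 1 ≤ k)
    (n : Fin k → ℕ) (l' l : ℕ) (hl'l : l' ≤ l) (hlk : l ≤ k)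
    (h2 : ∀ j : Fin k, (j : ℕ) < l' → n j % 4 = 2)
    (h0 : ∀ j : Fin k, l' ≤ (j : ℕ) → (j : ℕ) < l → n j % 4 = 0)
    (hodd : ∀ j : Fin k, l ≤ (j : ℕ) → Odd (n j))
    (f : MvPolynomial (Σ j : Fin k, Fin (n j + 1)) 𝕜) (hf : Dw 𝕜 k n f = 0) :
    projStar 𝕜 k n f ∈ Algebra.adjoin 𝕜
      {p : MvPolynomial (Σ j : Fin k, Fin (n j / 2 + 1)) 𝕜 |
        ∃ j : Fin k, (j : ℕ) < l ∧ p = MvPolynomial.X ⟨j, 0⟩} :=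
  projStar_image' 𝕜 k n l' l hl'l hlk hodd f hf
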